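/- For every real number x with 0 < x < π/2: 3/8 + x²/128 ≤ (1 - cos x / cos(x/2)) / x² ≤ 3/8 + (16/π⁴ - 3/(2π²))·x² ≤ 4/π². -/

import Mathlib

open Real

lemma my_sin_lb {t : ℝ} (ht : 0 ≤ t) : t - t^3/6 ≤ Real.sin t := by
  have H : MonotoneOn (fun s : ℝ => Real.sin s - (s - s^3/6)) (Set.Ici 0) := by
    refine monotoneOn_of_hasDerivWithinAt_nonneg (convex_Ici 0)
      ((Real.continuous_sin.sub (continuous_id.sub ((continuous_pow 3).div_const 6))).continuousOn)
      (f' := fun s => Real.cos s - (1 - s^2/2)) (fun s _ => ?_)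
      (fun s _ => by nlinarith [Real.one_sub_sq_div_two_le_cos (x := s)])
    have h2 := (Real.hasDerivAt_sin s).sub ((hasDerivAt_id s).sub ((hasDerivAt_pow 3 s).div_const 6))
    have h3 : HasDerivAt (fun s : ℝ => Real.sin s - (s - s^3/6)) (Real.cos s - (1 - s^2/2)) s := by
      exact h2.congr_deriv (by rw [show (3:ℕ) - 1 = 2 from rfl]; push_cast; ring)
    exact h3.hasDerivWithinAt
  have := H Set.self_mem_Ici ht ht
  simp at this
  linarith

lemma my_cos_ub {t : ℝ} (ht : 0 ≤ t) : Real.cos t ≤ 1 - t^2/2 + t^4/24 := by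
  have H : MonotoneOn (fun s : ℝ => 1 - s^2/2 + s^4/24 - Real.cos s) (Set.Ici 0) := by
    refine monotoneOn_of_hasDerivWithinAt_nonneg (convex_Ici 0)
      (Continuous.continuousOn (by continuity))
      (f' := fun s => Real.sin s - (s - s^3/6)) (fun s _ => ?_)
      (fun s hs => by
        rw [interior_Ici] at hs
        have := my_sin_lb (le_of_lt hs)
        linarith)
    have h2 := (((hasDerivAt_pow 2 s).div_const 2).neg.add ((hasDerivAt_pow 4 s).div_const 24)).sub (Real.hasDerivAt_cos s)
    have h3 : HasDerivAt (fun s : ℝ => 1 - s^2/2 + s^4/24 - Real.cos s) (Real.sin s - (s - s^3/6)) s := by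
      have h4 : HasDerivAt (fun s : ℝ => 1 - s^2/2 + s^4/24 - Real.cos s)
          (-(2*s^1/2) + 4*s^3/24 - (-Real.sin s)) s := by
        have h5 : (fun s : ℝ => 1 - s^2/2 + s^4/24 - Real.cos s)
            = fun s : ℝ => (1 + (-(s^2/2) + s^4/24)) - Real.cos s := by funext y; ring
        rw [h5]
        exact ((((hasDerivAt_pow 2 s).div_const 2).neg.add ((hasDerivAt_pow 4 s).div_const 24)).const_add 1).sub (Real.hasDerivAt_cos s)
      convert h4 using 1
      push_cast
      ring
    exact h3.hasDerivWithinAt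
  have := H Set.self_mem_Ici ht ht
  simp at this
  linarith

lemma my_sin_ub {t : ℝ} (ht : 0 ≤ t) : Real.sin t ≤ t - t^3/6 + t^5/120 := by
  have H : MonotoneOn (fun s : ℝ => s - s^3/6 + s^5/120 - Real.sin s) (Set.Ici 0) := by
    refine monotoneOn_of_hasDerivWithinAt_nonneg (convex_Ici 0)
      (Continuous.continuousOn (by continuity))
      (f' := fun s => 1 - s^2/2 + s^4/24 - Real.cos s) (fun s _ => ?_)
      (fun s hs => by
        rw [interior_Ici] at hs
        have := my_cos_ub (le_of_lt hs)
        linarith)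
    have h3 : HasDerivAt (fun s : ℝ => s - s^3/6 + s^5/120 - Real.sin s)
        (1 - s^2/2 + s^4/24 - Real.cos s) s := by
      have h4 : HasDerivAt (fun s : ℝ => s - s^3/6 + s^5/120 - Real.sin s)
          ((1 - 3*s^2/6 + 5*s^4/120) - Real.cos s) s := by
        exact (((hasDerivAt_id s).sub ((hasDerivAt_pow 3 s).div_const 6)).add ((hasDerivAt_pow 5 s).div_const 120)).sub (Real.hasDerivAt_sin s)
      convert h4 using 1
      push_cast
      ring
    exact h3.hasDerivWithinAt
  have := H Set.self_mem_Ici ht ht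
  simp at this
  linarith

lemma my_cos_lb {t : ℝ} (ht : 0 ≤ t) : 1 - t^2/2 + t^4/24 - t^6/720 ≤ Real.cos t := by
  have H : MonotoneOn (fun s : ℝ => Real.cos s - (1 - s^2/2 + s^4/24 - s^6/720)) (Set.Ici 0) := by
    refine monotoneOn_of_hasDerivWithinAt_nonneg (convex_Ici 0)
      (Continuous.continuousOn (by continuity))
      (f' := fun s => (s - s^3/6 + s^5/120) - Real.sin s) (fun s _ => ?_)
      (fun s hs => by
        rw [interior_Ici] at hs
        have := my_sin_ub (le_of_lt hs)
        linarith)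
    have h3 : HasDerivAt (fun s : ℝ => Real.cos s - (1 - s^2/2 + s^4/24 - s^6/720))
        ((s - s^3/6 + s^5/120) - Real.sin s) s := by
      have h4 : HasDerivAt (fun s : ℝ => Real.cos s - (1 - s^2/2 + s^4/24 - s^6/720))
          (-Real.sin s - (-(2*s^1/2) + 4*s^3/24 - 6*s^5/720)) s := by
        have h5 : (fun s : ℝ => Real.cos s - (1 - s^2/2 + s^4/24 - s^6/720))
            = fun s : ℝ => Real.cos s - (1 + (-(s^2/2) + s^4/24 - s^6/720)) := by funext y; ring
        rw [h5]
        exact (Real.hasDerivAt_cos s).sub (((((hasDerivAt_pow 2 s).div_const 2).neg.add ((hasDerivAt_pow 4 s).div_const 24)).sub ((hasDerivAt_pow 6 s).div_const 720)).const_add 1)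
      convert h4 using 1
      push_cast
      ring
    exact h3.hasDerivWithinAt
  have := H Set.self_mem_Ici ht ht
  simp at this
  linarith



set_option maxHeartbeats 1000000 in
lemma sandor_lower (t c : ℝ) (ht0 : 0 < t) (ht8 : t < 0.7853983) (hc7 : 0.69 < c)
    (hcu : c ≤ 1 - t^2/2 + t^4/24) :
    (3/8 + (2*t)^2/128) * (c*(2*t)^2) ≤ 1 + c - 2*c^2 := by
  have key1 : 0 ≤ ((1 - t^2/2 + t^4/24) - c) * (2*((1 - t^2/2 + t^4/24) + c) - 1 + (3/2*t^2 + t^4/8)) :=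
    mul_nonneg (by linarith) (by nlinarith)
  have key3 : 0 ≤ t^6/12 - 5*t^8/576 := by
    nlinarith [mul_nonneg (pow_nonneg ht0.le 6) (show (0:ℝ) ≤ 1/12 - 5*t^2/576 by nlinarith)]
  nlinarith [key1, key3]

set_option maxHeartbeats 1000000 in
lemma sandor_upper_small (t c K : ℝ) (ht0 : 0 < t) (hA : t ≤ 0.7) (hc7 : 0.69 < c)
    (hcl : 1 - t^2/2 + t^4/24 - t^6/720 ≤ c) (hKl : (0.196376:ℝ) ≤ 16*K) :
    1 + c - 2*c^2 ≤ 3/2*t^2*c + 16*K*t^4*c := by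
  have hcpos : (0:ℝ) ≤ c := by linarith
  have h16 : 3/2*t^2*c + 0.196376*t^4*c ≤ 3/2*t^2*c + 16*K*t^4*c := by
    nlinarith [mul_nonneg (mul_nonneg (show (0:ℝ) ≤ 16*K - 0.196376 by linarith) (pow_nonneg ht0.le 4)) hcpos]
  have ht2 : t^2 ≤ 0.49 := by nlinarith
  have ht4 : t^4 ≤ 0.2401 := by nlinarith [sq_nonneg (t^2 - 0.49)]
  have ht6 : t^6 ≤ 0.117649 := by nlinarith [mul_le_mul ht4 ht2 (by positivity) (by norm_num)]
  have key1 : 0 ≤ (c - (1 - t^2/2 + t^4/24 - t^6/720)) * (2*(c + (1 - t^2/2 + t^4/24 - t^6/720)) - 1 + (3/2*t^2 + 0.196376*t^4)) :=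
    mul_nonneg (by linarith) (by nlinarith [pow_nonneg ht0.le 2, pow_nonneg ht0.le 4])
  have hQpos : (0:ℝ) ≤ 4461/62500 - 30797/250000*t^2 + 12349/1000000*t^4 - 136141/270000000*t^6 + 1/259200*t^8 := by
    nlinarith [ht2, ht6, pow_nonneg ht0.le 4, pow_nonneg ht0.le 8]
  have key2 : 1 + (1 - t^2/2 + t^4/24 - t^6/720) - 2*(1 - t^2/2 + t^4/24 - t^6/720)^2
      - (1 - t^2/2 + t^4/24 - t^6/720)*(3/2*t^2 + 0.196376*t^4) ≤ 0 := by
    nlinarith [mul_nonneg (pow_nonneg ht0.le 4) hQpos]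
  nlinarith [key1, key2, h16]

set_option maxHeartbeats 1000000 in
lemma sandor_crunch (r w π' : ℝ) (hr0 : 0 < r) (hr1 : r ≤ 0.0853983) (hwl : (1.41421:ℝ) < w)
    (hwu : w < 1.41422) (hpi1 : (3.141592:ℝ) < π') (hpi2 : π' < 3.141593)
    (hrt : 0.7 < π'/4 - r) (K : ℝ) (hK0 : 0 ≤ K) (hKB : 16*K ≤ 0.196388) :
    (3/2*(π'/4+(π'/4 - r)) + 16*K*((π'/4+(π'/4 - r))*(π'^2/16+(π'/4 - r)^2))) * (w/2*(1 + r - r^2/2 - r^3/6))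
      ≤ (1 - r/2 - r^2/6)*((1 + r - r^2/2 - r^3/6)+1) := by
  have hp0 : (0:ℝ) ≤ 1 + r - r^2/2 - r^3/6 := by nlinarith
  have hX0 : (0:ℝ) ≤ (π'/4+(π'/4 - r))*(π'^2/16+(π'/4 - r)^2) := by nlinarith [sq_nonneg (π'/4 - r)]
  have hKs : 16*K*((π'/4+(π'/4 - r))*(π'^2/16+(π'/4 - r)^2)) ≤ 0.196388*((π'/4+(π'/4 - r))*(π'^2/16+(π'/4 - r)^2)) := by
    nlinarith [mul_nonneg (sub_nonneg.2 hKB) hX0]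
  have hd0' : (0:ℝ) ≤ w/2*(1 + r - r^2/2 - r^3/6) := by nlinarith
  have hstep0 : (3/2*(π'/4+(π'/4 - r)) + 16*K*((π'/4+(π'/4 - r))*(π'^2/16+(π'/4 - r)^2))) * (w/2*(1 + r - r^2/2 - r^3/6))
      ≤ (3/2*(π'/4+(π'/4 - r)) + 0.196388*((π'/4+(π'/4 - r))*(π'^2/16+(π'/4 - r)^2))) * (w/2*(1 + r - r^2/2 - r^3/6)) :=
    mul_le_mul_of_nonneg_right (by linarith [hKs]) hd0'
  refine hstep0.trans ?_
  have hB' : 3/2*(π'/4+(π'/4 - r)) + 0.196388*((π'/4+(π'/4 - r))*(π'^2/16+(π'/4 - r)^2))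
      ≤ (3.141593/2 - r)*(3/2 + 0.196388*(3.141593^2/16 + (3.141593/4 - r)^2)) := by
    nlinarith [mul_nonneg (sub_nonneg.2 hpi2.le) (show (0:ℝ) ≤ 3/2 + 0.196388*(3.141593^2/16 + (3.141593/4 - r)^2) by nlinarith [sq_nonneg (3.141593/4 - r)]),
      mul_nonneg (mul_nonneg (show (0:ℝ) ≤ π'/2 - r by linarith) (sub_nonneg.2 hpi2.le)) (show (0:ℝ) ≤ 3.141593 + π' by linarith),
      mul_nonneg (mul_nonneg (show (0:ℝ) ≤ π'/2 - r by linarith) (sub_nonneg.2 hpi2.le)) (show (0:ℝ) ≤ (3.141593/4 - r) + (π'/4 - r) by linarith)]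
  have hw' : w/2*(1 + r - r^2/2 - r^3/6) ≤ 0.70711*(1 + r - r^2/2 - r^3/6) := by nlinarith
  have hstep : (3/2*(π'/4+(π'/4 - r)) + 0.196388*((π'/4+(π'/4 - r))*(π'^2/16+(π'/4 - r)^2))) * (w/2*(1 + r - r^2/2 - r^3/6))
      ≤ ((3.141593/2 - r)*(3/2 + 0.196388*(3.141593^2/16 + (3.141593/4 - r)^2))) * (0.70711*(1 + r - r^2/2 - r^3/6)) := by
    apply mul_le_mul hB' hw' hd0' (by nlinarith [sq_nonneg (3.141593/4 - r)])
  refine hstep.trans ?_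
  have h3 : r^3 ≤ 0.0853983^3 := pow_le_pow_left₀ hr0.le hr1 3
  have h6 : r^6 ≤ 0.0853983^6 := pow_le_pow_left₀ hr0.le hr1 6
  nlinarith [hr1, h3, h6, sq_nonneg r, pow_nonneg hr0.le 4, pow_nonneg hr0.le 5]

set_option maxHeartbeats 1000000 in
lemma sandor_mono (t c K w p : ℝ) (hc7 : 0.69 < c) (hq0 : (0:ℝ) ≤ 3/2*t^2 + 16*K*t^4)
    (hdc : w/2*p ≤ c) (hp1 : 1 ≤ p) (hwl : (1.41421:ℝ) < w) :
    1 + c - 2*c^2 - (3/2*t^2 + 16*K*t^4)*c ≤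
      1 + (w/2*p) - 2*(w/2*p)^2 - (3/2*t^2 + 16*K*t^4)*(w/2*p) := by
  nlinarith [mul_nonneg (sub_nonneg.2 hdc) hq0,
    mul_nonneg (sub_nonneg.2 hdc) (show (0:ℝ) ≤ 2*(c + w/2*p) - 1 by nlinarith)]

set_option maxHeartbeats 1000000 in
lemma sandor_upper_large (t : ℝ) (hB : 0.7 < t) (htp : t < π/4) :
    1 + Real.cos t - 2*Real.cos t^2 ≤ 3/2*t^2*Real.cos t + 16*(16 / π^4 - 3 / (2*π^2))*t^4*Real.cos t := by
  obtain ⟨r, rfl⟩ : ∃ r, t = π/4 - r := ⟨π/4 - t, by ring⟩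
  have hpi1 : (3.141592 : ℝ) < π := pi_gt_d6
  have hpi2 : π < 3.141593 := pi_lt_d6
  have hpp : (0:ℝ) < π := pi_pos
  have hr0 : (0:ℝ) < r := by linarith
  have hr1 : r ≤ 0.0853983 := by linarith
  have hrt : (0.7:ℝ) < π/4 - r := hB
  set c := Real.cos (π/4 - r) with hc
  have hcl0 : 1 - (π/4 - r)^2/2 ≤ c := Real.one_sub_sq_div_two_le_cos
  have hc7 : (0.69 : ℝ) < c := by nlinarith [sq_nonneg (π/4 - r)]
  set K := 16 / π^4 - 3 / (2*π^2) with hKdef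
  have hK2 : K = (32 - 3*π^2) / (2*π^4) := by rw [hKdef]; field_simp; ring
  have hp2l : (9.8696002 : ℝ) < π^2 := by nlinarith [sq_nonneg (π - 3.141592)]
  have hp2u : π^2 < 9.8696066 := by nlinarith [sq_nonneg (π - 3.141593)]
  have hp4l : (97.409003 : ℝ) < π^4 := by nlinarith [sq_nonneg (π^2 - 9.8696002)]
  have hp4u : π^4 < 97.40915 := by nlinarith [sq_nonneg (π^2 - 9.8696066)]
  have hK0 : (0:ℝ) ≤ K := by
    rw [hK2]; apply div_nonneg (by nlinarith) (by positivity)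
  have hKu : K ≤ 0.0122742 := by
    rw [hK2, div_le_iff₀ (by positivity)]; nlinarith
  have hKB : 16*K ≤ 0.196388 := by linarith
  have hsinr : r - r^3/6 ≤ Real.sin r := my_sin_lb hr0.le
  have hcosr : 1 - r^2/2 ≤ Real.cos r := one_sub_sq_div_two_le_cos
  have hw2 : Real.sqrt 2 ^ 2 = 2 := Real.sq_sqrt (by norm_num)
  have hw0 : (0:ℝ) < Real.sqrt 2 := Real.sqrt_pos.2 (by norm_num)
  set w := Real.sqrt 2 with hwdef
  have hwu : w < 1.41422 := by nlinarith [hw2, hw0, sq_nonneg (w - 1.41422)]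
  have hwl : (1.41421 : ℝ) < w := by nlinarith [hw2, mul_pos (sub_pos.2 hwu) hw0]
  have hceq : c = w/2*(Real.cos r + Real.sin r) := by
    rw [hc, Real.cos_sub, Real.cos_pi_div_four, Real.sin_pi_div_four]; ring
  have hdc : w/2*(1 + r - r^2/2 - r^3/6) ≤ c := by
    rw [hceq]
    have h : (1 + r - r^2/2 - r^3/6) ≤ Real.cos r + Real.sin r := by linarith
    nlinarith [h, hw0]
  have hp1 : (1:ℝ) ≤ 1 + r - r^2/2 - r^3/6 := by
    nlinarith [mul_nonneg (sub_nonneg.2 hr1) hr0.le, mul_nonneg (mul_nonneg hr0.le hr0.le) hr0.le, sq_nonneg r]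
  have hq0 : (0:ℝ) ≤ 3/2*(π/4 - r)^2 + 16*K*(π/4 - r)^4 :=
    add_nonneg (by positivity) (mul_nonneg (mul_nonneg (by norm_num) hK0) (by positivity))
  have mono := sandor_mono (π/4 - r) c K w (1 + r - r^2/2 - r^3/6) hc7 hq0 hdc hp1 hwl
  have hKid : 3/2*(π/4 - r)^2 + 16*K*(π/4 - r)^4
      = 1 - r*(3/2*(π/4+(π/4 - r)) + 16*K*((π/4+(π/4 - r))*(π^2/16+(π/4 - r)^2))) := by
    rw [hKdef]
    field_simp
    ring
  have final := sandor_crunch r w π hr0 hr1 hwl hwu hpi1 hpi2 hrt K hK0 hKB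
  have hGl : 1 + (w/2*(1 + r - r^2/2 - r^3/6)) - 2*(w/2*(1 + r - r^2/2 - r^3/6))^2
      ≤ (3/2*(π/4 - r)^2 + 16*K*(π/4 - r)^4)*(w/2*(1 + r - r^2/2 - r^3/6)) := by
    rw [hKid]
    have hd2 : 2*(w/2*(1 + r - r^2/2 - r^3/6))^2 = (1 + r - r^2/2 - r^3/6)^2 := by
      have h : 2*(w/2*(1 + r - r^2/2 - r^3/6))^2 = w^2/2*(1 + r - r^2/2 - r^3/6)^2 := by ring
      rw [h, hw2]; ring
    nlinarith [mul_le_mul_of_nonneg_left final hr0.le, hd2]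
  linarith [mono, hGl]

set_option maxHeartbeats 1000000 in
theorem sandor_first_degree_two (x : ℝ) (hx : 0 < x) (hx' : x < π / 2) :
    3 / 8 + x ^ 2 / 128 ≤ (1 - Real.cos x / Real.cos (x / 2)) / x ^ 2 ∧
    (1 - Real.cos x / Real.cos (x / 2)) / x ^ 2 ≤ 3 / 8 + (16 / π ^ 4 - 3 / (2 * π ^ 2)) * x ^ 2 ∧
    3 / 8 + (16 / π ^ 4 - 3 / (2 * π ^ 2)) * x ^ 2 ≤ 4 / π ^ 2 := by
  obtain ⟨t, rfl⟩ : ∃ t, x = 2 * t := ⟨x / 2, by ring⟩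
  have hpi1 : (3.141592 : ℝ) < π := pi_gt_d6
  have hpi2 : π < 3.141593 := pi_lt_d6
  have hpp : (0:ℝ) < π := pi_pos
  have ht0 : 0 < t := by linarith
  have htp : t < π / 4 := by linarith
  have ht8 : t < 0.7853983 := by linarith
  have hct : (2 * t) / 2 = t := by ring
  rw [hct]
  have hcosx : Real.cos (2 * t) = 2 * Real.cos t ^ 2 - 1 := Real.cos_two_mul t
  set c := Real.cos t with hc
  have hcl0 : 1 - t^2/2 ≤ c := Real.one_sub_sq_div_two_le_cos
  have hc7 : (0.69 : ℝ) < c := by nlinarith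
  have hcx2 : (0:ℝ) < c * (2*t)^2 := by positivity
  have hrw : (1 - Real.cos (2*t) / c) / (2*t)^2 = (1 + c - 2*c^2) / (c * (2*t)^2) := by
    rw [hcosx]
    field_simp
    ring
  set K := 16 / π^4 - 3 / (2*π^2) with hKdef
  have hK2 : K = (32 - 3*π^2) / (2*π^4) := by rw [hKdef]; field_simp; ring
  have hp2l : (9.8696002 : ℝ) < π^2 := by nlinarith [sq_nonneg (π - 3.141592)]
  have hp2u : π^2 < 9.8696066 := by nlinarith [sq_nonneg (π - 3.141593)]
  have hp4l : (97.409003 : ℝ) < π^4 := by nlinarith [sq_nonneg (π^2 - 9.8696002)]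
  have hp4u : π^4 < 97.40915 := by nlinarith [sq_nonneg (π^2 - 9.8696066)]
  have hK0 : (0:ℝ) ≤ K := by
    rw [hK2]; apply div_nonneg (by nlinarith) (by positivity)
  have hKl : (0.0122735 : ℝ) ≤ K := by
    rw [hK2, le_div_iff₀ (by positivity)]; nlinarith
  refine ⟨?_, ?_, ?_⟩
  · rw [hrw, le_div_iff₀ hcx2]
    exact sandor_lower t c ht0 ht8 hc7 (my_cos_ub ht0.le)
  · rw [hrw, div_le_iff₀ hcx2]
    have hgoal2 : (3/8 + K*(2*t)^2)*(c*(2*t)^2) = 3/2*t^2*c + 16*K*t^4*c := by ring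
    rw [hgoal2]
    rcases le_or_gt t 0.7 with hA | hB
    · exact sandor_upper_small t c K ht0 hA hc7 (my_cos_lb ht0.le) (by linarith)
    · exact hKdef ▸ sandor_upper_large t hB htp
  · have h3 : 3/8 + K*(π/2)^2 = 4/π^2 := by
      rw [hKdef]; field_simp; ring
    have h4 : K*(2*t)^2 ≤ K*(π/2)^2 := by
      apply mul_le_mul_of_nonneg_left _ hK0
      nlinarith
    linarith
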